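/- For every n ≥ 3, every subset A ⊆ [n], and every triple a < b < c in [n], exactly 4 of the 6 linear orders on {a,b,c} occur as the restriction to {a,b,c} of some order in the set-alternating domain D_n(A); that is, D_n(A) is copious. -/

import Mathlib

/-- `σ` is in the set-alternating domain of `A` on alternatives `{1,…,n}`
(alternative `m` is represented by the index `m-1 : Fin n`; `σ x` is the rank
of alternative `x`, smaller rank = better). For every triple `i < j < k`:
if the middle alternative `j` (whose 1-based name is `j+1`) is in `A`, then
`i` is never ranked below both `j` and `k` (1N3); otherwise `k` is never
ranked above both `i` and `j` (3N1). -/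
def inSetAltDomain (n : ℕ) (A : Finset ℕ) (σ : Equiv.Perm (Fin n)) : Prop :=
  ∀ i j k : Fin n, i < j → j < k →
    (((j : ℕ) + 1 ∈ A) → ¬ (σ j < σ i ∧ σ k < σ i)) ∧
    (((j : ℕ) + 1 ∉ A) → ¬ (σ k < σ i ∧ σ k < σ j))

/-- The set-alternating domain `D_n(A)`. -/
def setAltDomain (n : ℕ) (A : Finset ℕ) : Set (Equiv.Perm (Fin n)) :=
  {σ | inSetAltDomain n A σ}

/-- `f_n(A)`, the cardinality of `D_n(A)`. -/
noncomputable def fsize (n : ℕ) (A : Finset ℕ) : ℕ := (setAltDomain n A).ncard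

/- ### Auxiliary construction -/

/-- Class of an alternative `x` for the witness order with block `[l,r]`:
ranking (best to worst): elements below `l` in order, then interior non-`A`
elements, then `r`, then `l`, then interior `A` elements, then elements
above `r`. -/
def clsW (A : Finset ℕ) (l r x : ℕ) : ℕ :=
  if x < l then 0 else if x = l then 3 else if x = r then 2
  else if r < x then 5 else if x + 1 ∈ A then 4 else 1

/-- Sorting key for the witness order. -/
def wkey (n : ℕ) (A : Finset ℕ) (l r : ℕ) (x : Fin n) : ℕ :=
  clsW A l r x * n + x

lemma wkey_injective (n : ℕ) (A : Finset ℕ) (l r : ℕ) :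
    Function.Injective (wkey n A l r) := by
  intro x y h
  have hx : wkey n A l r x % n = (x : ℕ) := by
    simp only [wkey]
    rw [Nat.mul_comm, Nat.mul_add_mod, Nat.mod_eq_of_lt x.isLt]
  have hy : wkey n A l r y % n = (y : ℕ) := by
    simp only [wkey]
    rw [Nat.mul_comm, Nat.mul_add_mod, Nat.mod_eq_of_lt y.isLt]
  exact Fin.ext (by rw [← hx, ← hy, h])

/-- The witness permutation: ranks alternatives by `wkey`. -/
def wperm (n : ℕ) (A : Finset ℕ) (l r : ℕ) : Equiv.Perm (Fin n) :=
  (Tuple.sort (wkey n A l r))⁻¹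

lemma wperm_lt_iff (n : ℕ) (A : Finset ℕ) (l r : ℕ) (x y : Fin n) :
    wperm n A l r x < wperm n A l r y ↔ wkey n A l r x < wkey n A l r y := by
  have hsm : StrictMono (wkey n A l r ∘ Tuple.sort (wkey n A l r)) :=
    (Tuple.monotone_sort _).strictMono_of_injective
      ((wkey_injective n A l r).comp (Equiv.injective _))
  have := hsm.lt_iff_lt (a := wperm n A l r x) (b := wperm n A l r y)
  simpa [wperm, Function.comp, Equiv.apply_symm_apply] using this.symm

lemma clsW_eq (A : Finset ℕ) (l r x : ℕ) :
    (clsW A l r x = 0 ∧ x < l) ∨ (clsW A l r x = 3 ∧ x = l) ∨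
    (clsW A l r x = 2 ∧ x = r) ∨ (clsW A l r x = 5 ∧ r < x) ∨
    (clsW A l r x = 4 ∧ l < x ∧ x < r ∧ x + 1 ∈ A) ∨
    (clsW A l r x = 1 ∧ l < x ∧ x < r ∧ x + 1 ∉ A) := by
  unfold clsW
  split_ifs with h1 h2 h3 h4 h5
  · exact Or.inl ⟨rfl, h1⟩
  · exact Or.inr (Or.inl ⟨rfl, h2⟩)
  · exact Or.inr (Or.inr (Or.inl ⟨rfl, h3⟩))
  · exact Or.inr (Or.inr (Or.inr (Or.inl ⟨rfl, h4⟩)))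
  · exact Or.inr (Or.inr (Or.inr (Or.inr (Or.inl ⟨rfl, by omega, by omega, h5⟩))))
  · exact Or.inr (Or.inr (Or.inr (Or.inr (Or.inr ⟨rfl, by omega, by omega, h5⟩))))

lemma wperm_mem (n : ℕ) (A : Finset ℕ) (l r : ℕ) (hlr : l < r) :
    inSetAltDomain n A (wperm n A l r) := by
  intro i j k hij hjk
  have hij' : (i : ℕ) < j := hij
  have hjk' : (j : ℕ) < k := hjk
  have hi := i.isLt
  have hj := j.isLt
  have hk := k.isLt
  constructor
  · rintro hmem ⟨h1, h2⟩
    rw [wperm_lt_iff] at h1 h2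
    simp only [wkey] at h1 h2
    rcases clsW_eq A l r ↑i with ⟨ei, pi1⟩|⟨ei, pi1⟩|⟨ei, pi1⟩|⟨ei, pi1⟩|⟨ei, pi1, pi2, mi⟩|⟨ei, pi1, pi2, mi⟩ <;>
      rcases clsW_eq A l r ↑j with ⟨ej, pj1⟩|⟨ej, pj1⟩|⟨ej, pj1⟩|⟨ej, pj1⟩|⟨ej, pj1, pj2, mj⟩|⟨ej, pj1, pj2, mj⟩ <;>
      rcases clsW_eq A l r ↑k with ⟨ek, pk1⟩|⟨ek, pk1⟩|⟨ek, pk1⟩|⟨ek, pk1⟩|⟨ek, pk1, pk2, mk⟩|⟨ek, pk1, pk2, mk⟩ <;>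
      simp only [ei, ej, ek] at h1 h2 <;>
      first | omega | exact mj hmem
  · rintro hmem ⟨h1, h2⟩
    rw [wperm_lt_iff] at h1 h2
    simp only [wkey] at h1 h2
    rcases clsW_eq A l r ↑i with ⟨ei, pi1⟩|⟨ei, pi1⟩|⟨ei, pi1⟩|⟨ei, pi1⟩|⟨ei, pi1, pi2, mi⟩|⟨ei, pi1, pi2, mi⟩ <;>
      rcases clsW_eq A l r ↑j with ⟨ej, pj1⟩|⟨ej, pj1⟩|⟨ej, pj1⟩|⟨ej, pj1⟩|⟨ej, pj1, pj2, mj⟩|⟨ej, pj1, pj2, mj⟩ <;>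
      rcases clsW_eq A l r ↑k with ⟨ek, pk1⟩|⟨ek, pk1⟩|⟨ek, pk1⟩|⟨ek, pk1⟩|⟨ek, pk1, pk2, mk⟩|⟨ek, pk1, pk2, mk⟩ <;>
      simp only [ei, ej, ek] at h1 h2 <;>
      first | omega | exact hmem mj

lemma one_mem_dom (n : ℕ) (A : Finset ℕ) : inSetAltDomain n A 1 := by
  intro i j k hij hjk
  refine ⟨fun _ h => ?_, fun _ h => ?_⟩
  · simp only [Equiv.Perm.one_apply] at h; exact absurd h.1 hij.asymm
  · simp only [Equiv.Perm.one_apply] at h; exact absurd h.1 (hij.trans hjk).asymm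

/- clsW evaluation lemmas -/
lemma clsW_lt {A : Finset ℕ} {l r x : ℕ} (h : x < l) : clsW A l r x = 0 := if_pos h

lemma clsW_l {A : Finset ℕ} {l r : ℕ} : clsW A l r l = 3 := by
  unfold clsW; rw [if_neg (lt_irrefl l), if_pos rfl]

lemma clsW_r {A : Finset ℕ} {l r : ℕ} (h : l < r) : clsW A l r r = 2 := by
  unfold clsW; rw [if_neg (by omega), if_neg (by omega), if_pos rfl]

lemma clsW_gt {A : Finset ℕ} {l r x : ℕ} (h : r < x) (hlr : l < r) :
    clsW A l r x = 5 := by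
  unfold clsW
  rw [if_neg (by omega), if_neg (by omega), if_neg (by omega), if_pos h]

lemma clsW_mid_mem {A : Finset ℕ} {l r x : ℕ} (h1 : l < x) (h2 : x < r)
    (hm : x + 1 ∈ A) : clsW A l r x = 4 := by
  unfold clsW
  rw [if_neg (by omega), if_neg (by omega), if_neg (by omega), if_neg (by omega),
    if_pos hm]

lemma clsW_mid_not {A : Finset ℕ} {l r x : ℕ} (h1 : l < x) (h2 : x < r)
    (hm : x + 1 ∉ A) : clsW A l r x = 1 := by
  unfold clsW
  rw [if_neg (by omega), if_neg (by omega), if_neg (by omega), if_neg (by omega),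
    if_neg hm]

/-- `D_n(A)` is copious: for each triple `a < b < c`, exactly 4 of
the 6 possible restrictions to `{a,b,c}` (encoded by the three pairwise
comparisons) occur among orders of the domain. -/
theorem stmt0 (n : ℕ) (hn : 3 ≤ n) (A : Finset ℕ) (hA : A ⊆ Finset.Icc 1 n)
    (a b c : Fin n) (hab : a < b) (hbc : b < c) :
    Set.ncard ((fun σ : Equiv.Perm (Fin n) =>
        (decide (σ a < σ b), decide (σ b < σ c), decide (σ a < σ c))) ''
      setAltDomain n A) = 4 := by
  have hab' : (a : ℕ) < b := hab
  have hbc' : (b : ℕ) < c := hbc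
  have ha := a.isLt
  have hb := b.isLt
  have hc := c.isLt
  -- comparison facts for the three witness permutations
  -- witness 1 : block [b,c] : pattern a < c < b
  have w1 := wperm_lt_iff n A b c
  have w1ab : wperm n A b c a < wperm n A b c b := by
    rw [w1]; simp only [wkey, clsW_lt hab', clsW_l]; omega
  have w1cb : wperm n A b c c < wperm n A b c b := by
    rw [w1]; simp only [wkey, clsW_r hbc', clsW_l]; omega
  have w1ac : wperm n A b c a < wperm n A b c c := by
    rw [w1]; simp only [wkey, clsW_lt hab', clsW_r hbc']; omega
  -- witness 2 : block [a,b] : pattern b < a < c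
  have w2 := wperm_lt_iff n A a b
  have w2ba : wperm n A a b b < wperm n A a b a := by
    rw [w2]; simp only [wkey, clsW_r hab', clsW_l]; omega
  have w2bc : wperm n A a b b < wperm n A a b c := by
    rw [w2]; simp only [wkey, clsW_r hab', clsW_gt hbc' hab']; omega
  have w2ac : wperm n A a b a < wperm n A a b c := by
    rw [w2]; simp only [wkey, clsW_l, clsW_gt hbc' hab']; omega
  -- witness 3 : block [a,c]
  have hac' : (a : ℕ) < c := lt_trans hab' hbc'
  have w3 := wperm_lt_iff n A a c
  have w3ca : wperm n A a c c < wperm n A a c a := by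
    rw [w3]; simp only [wkey, clsW_r hac', clsW_l]; omega
  by_cases hbA : (b : ℕ) + 1 ∈ A
  · -- image = {(t,t,t),(t,f,t),(f,t,t),(t,f,f)}
    have w3ab : wperm n A a c a < wperm n A a c b := by
      rw [w3]; simp only [wkey, clsW_l, clsW_mid_mem hab' hbc' hbA]; omega
    have w3cb : wperm n A a c c < wperm n A a c b := by
      rw [w3]; simp only [wkey, clsW_r hac', clsW_mid_mem hab' hbc' hbA]; omega
    have himg : ((fun σ : Equiv.Perm (Fin n) =>
        (decide (σ a < σ b), decide (σ b < σ c), decide (σ a < σ c))) ''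
      setAltDomain n A) = ↑({(true, true, true), (true, false, true),
        (false, true, true), (true, false, false)} : Finset (Bool × Bool × Bool)) := by
      ext x
      constructor
      · rintro ⟨σ, hσ, rfl⟩
        have hcond := (hσ a b c hab hbc).1 hbA
        have nab := lt_or_gt_of_ne (σ.injective.ne hab.ne)
        have nbc := lt_or_gt_of_ne (σ.injective.ne hbc.ne)
        have nac := lt_or_gt_of_ne (σ.injective.ne (hab.trans hbc).ne)
        rcases nab with h1 | h1 <;> rcases nbc with h2 | h2 <;> rcases nac with h3 | h3
        · simp [h1, h2, h3]
        · exact absurd (h1.trans h2) h3.not_gt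
        · simp [h1, h2.not_gt, h3]
        · simp [h1, h2.not_gt, h3.not_gt]
        · simp [h1.not_gt, h2, h3]
        · exact absurd ⟨h1, h3⟩ hcond
        · exact absurd (h3.trans h2) h1.not_gt
        · exact absurd ⟨h1, h3⟩ hcond
      · intro hx
        simp only [Finset.coe_insert, Set.mem_insert_iff, Finset.coe_singleton,
          Set.mem_singleton_iff] at hx
        rcases hx with rfl | rfl | rfl | rfl
        · exact ⟨1, one_mem_dom n A, by
            simp [Equiv.Perm.one_apply, hab, hbc, hab.trans hbc]⟩
        · exact ⟨wperm n A b c, wperm_mem n A b c hbc', by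
            simp [w1ab, w1cb.not_gt, w1ac]⟩
        · exact ⟨wperm n A a b, wperm_mem n A a b hab', by
            simp [w2ba.not_gt, w2bc, w2ac]⟩
        · exact ⟨wperm n A a c, wperm_mem n A a c hac', by
            simp [w3ab, w3cb.not_gt, w3ca.not_gt]⟩
    rw [himg, Set.ncard_coe_finset]
    decide
  · -- image = {(t,t,t),(t,f,t),(f,t,t),(f,t,f)}
    have w3ba : wperm n A a c b < wperm n A a c a := by
      rw [w3]; simp only [wkey, clsW_l, clsW_mid_not hab' hbc' hbA]; omega
    have w3bc : wperm n A a c b < wperm n A a c c := by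
      rw [w3]; simp only [wkey, clsW_r hac', clsW_mid_not hab' hbc' hbA]; omega
    have himg : ((fun σ : Equiv.Perm (Fin n) =>
        (decide (σ a < σ b), decide (σ b < σ c), decide (σ a < σ c))) ''
      setAltDomain n A) = ↑({(true, true, true), (true, false, true),
        (false, true, true), (false, true, false)} : Finset (Bool × Bool × Bool)) := by
      ext x
      constructor
      · rintro ⟨σ, hσ, rfl⟩
        have hcond := (hσ a b c hab hbc).2 hbA
        have nab := lt_or_gt_of_ne (σ.injective.ne hab.ne)
        have nbc := lt_or_gt_of_ne (σ.injective.ne hbc.ne)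
        have nac := lt_or_gt_of_ne (σ.injective.ne (hab.trans hbc).ne)
        rcases nab with h1 | h1 <;> rcases nbc with h2 | h2 <;> rcases nac with h3 | h3
        · simp [h1, h2, h3]
        · exact absurd (h1.trans h2) h3.not_gt
        · simp [h1, h2.not_gt, h3]
        · exact absurd ⟨h3, h2⟩ hcond
        · simp [h1.not_gt, h2, h3]
        · simp [h1.not_gt, h2, h3.not_gt]
        · exact absurd (h3.trans h2) h1.not_gt
        · exact absurd ⟨h3, h2⟩ hcond
      · intro hx
        simp only [Finset.coe_insert, Set.mem_insert_iff, Finset.coe_singleton,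
          Set.mem_singleton_iff] at hx
        rcases hx with rfl | rfl | rfl | rfl
        · exact ⟨1, one_mem_dom n A, by
            simp [Equiv.Perm.one_apply, hab, hbc, hab.trans hbc]⟩
        · exact ⟨wperm n A b c, wperm_mem n A b c hbc', by
            simp [w1ab, w1cb.not_gt, w1ac]⟩
        · exact ⟨wperm n A a b, wperm_mem n A a b hab', by
            simp [w2ba.not_gt, w2bc, w2ac]⟩
        · exact ⟨wperm n A a c, wperm_mem n A a c hac', by
            simp [w3ba, w3ba.le, w3bc, w3ca.not_gt]⟩
    rw [himg, Set.ncard_coe_finset]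
    decide
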